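/- Under FCFS, in a busy period with n ≥ 3 jobs, at least one job has sojourn time at least j + δ. Specifically, any job k ≥ 2 whose preceding inter-arrival time is j_1 = j+1−δ and whose predecessor has sojourn time at least 2j − Y_{k−1} + 1 satisfies W_k ≥ j + δ; such a job exists when n ≥ 3. -/
import Mathlib


/-- FCFS, busy period with `n ≥ 3` jobs: any job `k ≥ 2` whose preceding
inter-arrival time equals `j₁ = j+1-δ` and whose predecessor has sojourn time
at least `2j - Y (k-1) + 1` satisfies `W k ≥ j + δ`; and (since a busy period
with `n ≥ 3` jobs contains an inter-arrival equal to `j₁` at position `k ≥ 3`)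
some job has sojourn time at least `j + δ`. -/
theorem fcfs_exists_large_sojourn
    (n : ℕ) (j δ : ℤ) (Y W : ℕ → ℤ)
    (hδ1 : 1 ≤ δ) (hδ2 : 2 * δ ≤ j)
    (hn : 3 ≤ n)
    (hY : ∀ i, Y i = j + 1 - δ ∨ Y i = j + 1 + δ)
    (hW1 : W 1 = j)
    (hrec : ∀ k, 2 ≤ k → k ≤ n → W k = W (k - 1) - Y (k - 1) + j)
    (hbusy : ∀ k, 2 ≤ k → k ≤ n → Y (k - 1) < W (k - 1))
    (hj1 : ∃ k, 3 ≤ k ∧ k ≤ n ∧ Y (k - 1) = j + 1 - δ) :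
    (∀ k, 2 ≤ k → k ≤ n → Y (k - 1) = j + 1 - δ →
        2 * j - Y (k - 1) + 1 ≤ W (k - 1) → j + δ ≤ W k) ∧
      (∃ k, 2 ≤ k ∧ k ≤ n ∧ j + δ ≤ W k) := by
  constructor
  · intro k hk2 hkn hYk hWk
    have h := hrec k hk2 hkn
    rw [hYk] at hWk
    have : W k = W (k - 1) - (j + 1 - δ) + j := by rw [h, hYk]
    rw [this]
    linarith
  · obtain ⟨k, hk3, hkn, hYk⟩ := hj1
    refine ⟨k, by omega, hkn, ?_⟩
    have h1 := hrec k (by omega) hkn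
    have h2 := hrec (k - 1) (by omega) (by omega)
    have h3 := hbusy (k - 1) (by omega) (by omega)
    have hWk1 : j + 1 ≤ W (k - 1) := by
      rw [h2]; linarith
    rw [h1, hYk]
    linarith
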